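/- If a sequence (α_n) = ((μ_n, ν_n)) of IFNs, each satisfying α_n >_L (0,1), ⊗-converges to an IFN ξ >_L (0,1), then for any weights (p_n) with p₀ > 0 and P_n → ∞, the weighted geometric means h_n = (⊗_{k=0}^n α_k^{p_k})^{1/P_n} = (∏_{k=0}^n μ_k^{p_k/P_n}, 1 − ∏_{k=0}^n (1−ν_k)^{p_k/P_n}) also ⊗-converge to ξ. -/

import Mathlib

open Filter Topology

noncomputable def Psum (p : ℕ → ℝ) (n : ℕ) : ℝ := ∑ k ∈ Finset.range (n + 1), p k

/-- ⊗-convergence of a sequence of IFNs (given as pairs) to an IFN ξ = (μξ, νξ). -/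
def OtimesConvergesTo (t : ℕ → ℝ × ℝ) (μξ νξ : ℝ) : Prop :=
  ∀ ε : ℝ, 0 < ε → ε ≤ 1 → ∃ n₀ : ℕ, ∀ n > n₀,
    ((t n).1 * (1 - ε) < μξ ∧ νξ < 1 - (1 - (t n).2) * (1 - ε)) ∧
    (μξ * (1 - ε) < (t n).1 ∧ (t n).2 < 1 - (1 - νξ) * (1 - ε))

/-- From the two-sided ratio condition we get ordinary convergence. -/
lemma tendsto_of_ratio (f : ℕ → ℝ) (A : ℝ) (hA : 0 < A)
    (h : ∀ ε : ℝ, 0 < ε → ε ≤ 1 → ∃ n₀ : ℕ, ∀ n > n₀, A * (1 - ε) < f n ∧ f n * (1 - ε) < A) :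
    Tendsto f atTop (𝓝 A) := by
  rw [Metric.tendsto_atTop]
  intro δ hδ
  set ε : ℝ := min (1/2) (δ / (2 * A + 2)) with hε
  have hεpos : 0 < ε := lt_min (by norm_num) (div_pos hδ (by linarith))
  have hε1 : ε ≤ 1 := le_trans (min_le_left _ _) (by norm_num)
  have hεhalf : ε ≤ 1/2 := min_le_left _ _
  have hεδ : ε ≤ δ / (2 * A + 2) := min_le_right _ _
  obtain ⟨n₀, hn₀⟩ := h ε hεpos hε1
  refine ⟨n₀ + 1, fun n hn => ?_⟩
  obtain ⟨h1, h2⟩ := hn₀ n (by omega)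
  rw [Real.dist_eq, abs_lt]
  have hAε : A * ε < δ / 2 := by
    have : A * ε ≤ A * (δ / (2 * A + 2)) := by
      apply mul_le_mul_of_nonneg_left hεδ hA.le
    calc A * ε ≤ A * (δ / (2 * A + 2)) := this
      _ < δ / 2 := by
        rw [mul_comm A, div_mul_eq_mul_div, div_lt_div_iff₀ (by linarith : (0:ℝ) < 2 * A + 2) (by norm_num : (0:ℝ) < 2)]
        nlinarith
  constructor
  · -- -δ < f n - A
    nlinarith
  · -- f n - A < δ : from f n * (1-ε) < A, 1-ε ≥ 1/2
    have h1ε : (1:ℝ)/2 ≤ 1 - ε := by linarith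
    have hfn : f n < A / (1 - ε) := by
      rw [lt_div_iff₀ (by linarith : (0:ℝ) < 1 - ε)]
      exact h2
    have : A / (1 - ε) - A = A * ε / (1 - ε) := by
      field_simp
      ring
    have hfrac : A * ε / (1 - ε) ≤ 2 * (A * ε) := by
      rw [div_le_iff₀ (by linarith : (0:ℝ) < 1 - ε)]
      nlinarith [mul_nonneg hA.le hεpos.le]
    nlinarith

/-- Weighted Cesàro regularity. -/
lemma weighted_cesaro (p : ℕ → ℝ) (hp : ∀ n, 0 ≤ p n) (hp0 : 0 < p 0)
    (hP : Tendsto (Psum p) atTop atTop) (x : ℕ → ℝ) (L : ℝ)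
    (hx : Tendsto x atTop (𝓝 L)) :
    Tendsto (fun n => (∑ k ∈ Finset.range (n + 1), p k * x k) / Psum p n) atTop (𝓝 L) := by
  rw [Metric.tendsto_atTop]
  intro δ hδ
  rw [Metric.tendsto_atTop] at hx
  obtain ⟨N, hN⟩ := hx (δ/4) (by linarith)
  set C : ℝ := ∑ k ∈ Finset.range N, p k * |x k - L| with hC
  have hCnn : 0 ≤ C := Finset.sum_nonneg fun k _ =>
    mul_nonneg (hp k) (abs_nonneg _)
  obtain ⟨M, hM⟩ := eventually_atTop.1 (tendsto_atTop.1 hP (max 1 (2 * C / δ + 1)))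
  refine ⟨max N M, fun n hn => ?_⟩
  have hnN : N ≤ n := le_trans (le_max_left _ _) hn
  have hnM : M ≤ n := le_trans (le_max_right _ _) hn
  have hPn : max 1 (2 * C / δ + 1) ≤ Psum p n := hM n hnM
  have hPn1 : (1:ℝ) ≤ Psum p n := le_trans (le_max_left _ _) hPn
  have hPnpos : 0 < Psum p n := by linarith
  have hPnC : 2 * C / δ + 1 ≤ Psum p n := le_trans (le_max_right _ _) hPn
  rw [Real.dist_eq]
  have key : (∑ k ∈ Finset.range (n + 1), p k * x k) / Psum p n - L
      = (∑ k ∈ Finset.range (n + 1), p k * (x k - L)) / Psum p n := by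
    rw [eq_div_iff hPnpos.ne', sub_mul, div_mul_cancel₀ _ hPnpos.ne']
    simp only [mul_sub, Finset.sum_sub_distrib, ← Finset.sum_mul, Psum]
    ring
  rw [key, abs_div, abs_of_pos hPnpos]
  have hsplit : Finset.range (n + 1) = Finset.range N ∪ Finset.Ico N (n + 1) := by
    rw [Finset.range_eq_Ico, Finset.range_eq_Ico]
    exact (Finset.Ico_union_Ico_eq_Ico (Nat.zero_le N) (by omega)).symm
  have habs : |∑ k ∈ Finset.range (n + 1), p k * (x k - L)| ≤ C + δ/4 * Psum p n := by
    calc |∑ k ∈ Finset.range (n + 1), p k * (x k - L)|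
        ≤ ∑ k ∈ Finset.range (n + 1), |p k * (x k - L)| :=
          Finset.abs_sum_le_sum_abs _ _
      _ = ∑ k ∈ Finset.range (n + 1), p k * |x k - L| := by
          refine Finset.sum_congr rfl fun k _ => ?_
          rw [abs_mul, abs_of_nonneg (hp k)]
      _ = C + ∑ k ∈ Finset.Ico N (n + 1), p k * |x k - L| := by
          rw [hsplit, Finset.sum_union (by
            rw [Finset.range_eq_Ico]; exact Finset.Ico_disjoint_Ico_consecutive 0 N (n+1))]
      _ ≤ C + ∑ k ∈ Finset.Ico N (n + 1), p k * (δ/4) := by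
          gcongr with k hk
          · exact hp k
          · have hkN : N ≤ k := (Finset.mem_Ico.1 hk).1
            have := hN k hkN
            rw [Real.dist_eq] at this
            exact this.le
      _ = C + (∑ k ∈ Finset.Ico N (n + 1), p k) * (δ/4) := by
          rw [Finset.sum_mul]
      _ ≤ C + Psum p n * (δ/4) := by
          have hle : ∑ k ∈ Finset.Ico N (n + 1), p k ≤ Psum p n := by
            simp only [Psum]
            rw [hsplit, Finset.sum_union (by
              rw [Finset.range_eq_Ico]; exact Finset.Ico_disjoint_Ico_consecutive 0 N (n+1))]
            have : 0 ≤ ∑ k ∈ Finset.range N, p k := Finset.sum_nonneg fun k _ => hp k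
            linarith
          have := mul_le_mul_of_nonneg_right hle (by linarith : (0:ℝ) ≤ δ/4)
          linarith
      _ = C + δ/4 * Psum p n := by ring
  have hCPn : C / Psum p n < δ / 2 := by
    rw [div_lt_iff₀ hPnpos]
    have h1 := mul_le_mul_of_nonneg_right hPnC hδ.le
    rw [add_mul, div_mul_cancel₀ _ hδ.ne'] at h1
    nlinarith
  calc |∑ k ∈ Finset.range (n + 1), p k * (x k - L)| / Psum p n
      ≤ (C + δ/4 * Psum p n) / Psum p n := by
        gcongr
    _ = C / Psum p n + δ/4 := by
        rw [add_div, mul_div_assoc, div_self hPnpos.ne', mul_one]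
    _ < δ := by linarith

/-- From convergence to a positive limit we get the one-sided ratio conditions. -/
lemma ratio_of_tendsto (f : ℕ → ℝ) (A : ℝ) (hA : 0 < A) (h : Tendsto f atTop (𝓝 A))
    (ε : ℝ) (hε : 0 < ε) (hε1 : ε ≤ 1) :
    ∃ n₀ : ℕ, ∀ n > n₀, A * (1 - ε) < f n ∧ f n * (1 - ε) < A := by
  have hlt : A * (1 - ε) < A := by nlinarith
  have h1 : ∀ᶠ n in atTop, A * (1 - ε) < f n :=
    h.eventually (eventually_gt_nhds hlt)
  have h2 : ∀ᶠ n in atTop, f n * (1 - ε) < A :=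
    (h.mul_const (1 - ε)).eventually (eventually_lt_nhds hlt)
  obtain ⟨N, hN⟩ := (h1.and h2).exists_forall_of_atTop
  exact ⟨N, fun n hn => hN n hn.le⟩

theorem weighted_geometric_mean_ifn_regular (p : ℕ → ℝ) (μ ν : ℕ → ℝ) (μξ νξ : ℝ)
    (hp : ∀ n, 0 ≤ p n) (hp0 : 0 < p 0) (hP : Tendsto (Psum p) atTop atTop)
    (hμ : ∀ n, 0 ≤ μ n) (hν : ∀ n, 0 ≤ ν n) (hsum : ∀ n, μ n + ν n ≤ 1)
    (hα : ∀ n, 0 < μ n ∧ ν n < 1)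
    (hμξ : 0 ≤ μξ) (hνξ : 0 ≤ νξ) (hsumξ : μξ + νξ ≤ 1)
    (hξ : 0 < μξ ∧ νξ < 1)
    (hconv : OtimesConvergesTo (fun n => (μ n, ν n)) μξ νξ) :
    OtimesConvergesTo
      (fun n => (∏ k ∈ Finset.range (n + 1), μ k ^ (p k / Psum p n),
        1 - ∏ k ∈ Finset.range (n + 1), (1 - ν k) ^ (p k / Psum p n))) μξ νξ := by
  have hB : 0 < 1 - νξ := by linarith [hξ.2]
  -- ordinary convergence of μ and 1 - ν
  have hμconv : Tendsto μ atTop (𝓝 μξ) := by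
    apply tendsto_of_ratio μ μξ hξ.1
    intro ε hε hε1
    obtain ⟨n₀, hn₀⟩ := hconv ε hε hε1
    exact ⟨n₀, fun n hn => ⟨(hn₀ n hn).2.1, (hn₀ n hn).1.1⟩⟩
  have hgconv : Tendsto (fun n => 1 - ν n) atTop (𝓝 (1 - νξ)) := by
    apply tendsto_of_ratio _ _ hB
    intro ε hε hε1
    obtain ⟨n₀, hn₀⟩ := hconv ε hε hε1
    refine ⟨n₀, fun n hn => ⟨?_, ?_⟩⟩
    · have := (hn₀ n hn).2.2; simp only at this ⊢; linarith
    · have := (hn₀ n hn).1.2; simp only at this ⊢; linarith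
  -- positivity of P
  have hPpos : ∀ n, 0 < Psum p n := by
    intro n
    have : p 0 ≤ Psum p n := by
      rw [Psum]
      exact Finset.single_le_sum (fun k _ => hp k) (Finset.mem_range.2 (by omega))
    linarith
  -- log convergence and weighted Cesàro
  have hlogμ : Tendsto (fun n => Real.log (μ n)) atTop (𝓝 (Real.log μξ)) :=
    ((Real.continuousAt_log hξ.1.ne').tendsto).comp hμconv
  have hlogg : Tendsto (fun n => Real.log (1 - ν n)) atTop (𝓝 (Real.log (1 - νξ))) :=
    ((Real.continuousAt_log hB.ne').tendsto).comp hgconv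
  have hA := weighted_cesaro p hp hp0 hP _ _ hlogμ
  have hBc := weighted_cesaro p hp hp0 hP _ _ hlogg
  -- products as exponentials
  have prodμ : ∀ n, ∏ k ∈ Finset.range (n + 1), μ k ^ (p k / Psum p n)
      = Real.exp ((∑ k ∈ Finset.range (n + 1), p k * Real.log (μ k)) / Psum p n) := by
    intro n
    calc ∏ k ∈ Finset.range (n + 1), μ k ^ (p k / Psum p n)
        = ∏ k ∈ Finset.range (n + 1), Real.exp (p k * Real.log (μ k) / Psum p n) := by
          refine Finset.prod_congr rfl fun k _ => ?_
          rw [Real.rpow_def_of_pos (hα k).1]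
          congr 1
          ring
      _ = Real.exp (∑ k ∈ Finset.range (n + 1), p k * Real.log (μ k) / Psum p n) := by
          rw [← Real.exp_sum]
      _ = _ := by rw [Finset.sum_div]
  have prodg : ∀ n, ∏ k ∈ Finset.range (n + 1), (1 - ν k) ^ (p k / Psum p n)
      = Real.exp ((∑ k ∈ Finset.range (n + 1), p k * Real.log (1 - ν k)) / Psum p n) := by
    intro n
    calc ∏ k ∈ Finset.range (n + 1), (1 - ν k) ^ (p k / Psum p n)
        = ∏ k ∈ Finset.range (n + 1), Real.exp (p k * Real.log (1 - ν k) / Psum p n) := by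
          refine Finset.prod_congr rfl fun k _ => ?_
          rw [Real.rpow_def_of_pos (by linarith [(hα k).2] : (0:ℝ) < 1 - ν k)]
          congr 1
          ring
      _ = Real.exp (∑ k ∈ Finset.range (n + 1), p k * Real.log (1 - ν k) / Psum p n) := by
          rw [← Real.exp_sum]
      _ = _ := by rw [Finset.sum_div]
  set a : ℕ → ℝ := fun n => ∏ k ∈ Finset.range (n + 1), μ k ^ (p k / Psum p n) with ha
  set b : ℕ → ℝ := fun n => ∏ k ∈ Finset.range (n + 1), (1 - ν k) ^ (p k / Psum p n) with hb
  have haconv : Tendsto a atTop (𝓝 μξ) := by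
    have : Tendsto (fun n => Real.exp ((∑ k ∈ Finset.range (n + 1),
        p k * Real.log (μ k)) / Psum p n)) atTop (𝓝 (Real.exp (Real.log μξ))) :=
      (Real.continuous_exp.tendsto _).comp hA
    rw [Real.exp_log hξ.1] at this
    exact this.congr fun n => (prodμ n).symm
  have hbconv : Tendsto b atTop (𝓝 (1 - νξ)) := by
    have : Tendsto (fun n => Real.exp ((∑ k ∈ Finset.range (n + 1),
        p k * Real.log (1 - ν k)) / Psum p n)) atTop (𝓝 (Real.exp (Real.log (1 - νξ)))) :=
      (Real.continuous_exp.tendsto _).comp hBc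
    rw [Real.exp_log hB] at this
    exact this.congr fun n => (prodg n).symm
  -- final ε–n₀ statement
  intro ε hε hε1
  obtain ⟨n₁, hn₁⟩ := ratio_of_tendsto a μξ hξ.1 haconv ε hε hε1
  obtain ⟨n₂, hn₂⟩ := ratio_of_tendsto b (1 - νξ) hB hbconv ε hε hε1
  refine ⟨max n₁ n₂, fun n hn => ?_⟩
  have h1 := hn₁ n (lt_of_le_of_lt (le_max_left _ _) hn)
  have h2 := hn₂ n (lt_of_le_of_lt (le_max_right _ _) hn)
  simp only
  refine ⟨⟨h1.2, ?_⟩, ⟨h1.1, ?_⟩⟩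
  · have : b n * (1 - ε) < 1 - νξ := h2.2
    have hb1 : (1 : ℝ) - (1 - b n) = b n := by ring
    rw [hb1]
    linarith
  · have : (1 - νξ) * (1 - ε) < b n := h2.1
    linarith
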